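/- Let A be the 3×3 matrix with rows (0, ω_r, cω_r), (−ω_r, 0, v_r), (0, 0, 0), and B the 3×2 matrix with rows (−1, 0), (0, c), (0, −1). If v_r ≠ 0 and c ≠ −1, then the pair (A, B) is controllable, i.e., the controllability matrix [B, AB, A²B] has rank 3. -/

import Mathlib

open Matrix

/-- For the linearized vessel model, if `v_r ≠ 0` and `c ≠ −1`, the pair
`(A, B)` is controllable: the controllability matrix `[B, AB, A²B]` has rank 3. -/
theorem vessel_controllable (ωr vr c : ℝ) (hv : vr ≠ 0) (hc : c ≠ -1) :
    let A : Matrix (Fin 3) (Fin 3) ℝ := !![0, ωr, c * ωr; -ωr, 0, vr; 0, 0, 0]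
    let B : Matrix (Fin 3) (Fin 2) ℝ := !![-1, 0; 0, c; 0, -1]
    (fromCols (fromCols B (A * B)) (A * A * B)).rank = 3 := by
  intro A B
  set M := fromCols (fromCols B (A * B)) (A * A * B) with hM
  have hle : M.rank ≤ 3 := by
    simpa using M.rank_le_card_height
  have hge : 3 ≤ M.rank := by
    set N : Matrix ((Fin 2 ⊕ Fin 2) ⊕ Fin 2) (Fin 3) ℝ :=
      fromRows (fromRows !![-1, 0, 0; 0, 0, -1] !![0, 0, 0; 0, -1/vr, -c/vr]) 0 with hN
    have hMN : M * N = 1 := by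
      rw [hM, hN, fromCols_mul_fromRows, fromCols_mul_fromRows]
      ext i j
      fin_cases i <;> fin_cases j <;>
        simp [A, B, Matrix.mul_apply, Fin.sum_univ_succ, Matrix.one_apply] <;>
        first
          | rfl
          | (left; ring)
          | (field_simp; ring)
          | field_simp
    calc 3 = (1 : Matrix (Fin 3) (Fin 3) ℝ).rank := by simp
    _ = (M * N).rank := by rw [hMN]
    _ ≤ M.rank := Matrix.rank_mul_le_left M N
  omega
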